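/- Size bound for the updatability predicate: there is a constant c such that for every update specification S_up = (D, ann_up) and update type ut, the syntactic size of the predicate U_ut = U_ut^1 ∧ U_ut^2 is at most c · (|S_ut| + 1), where S_ut is the set of annotations of type ut, and hence at most c · (|ann_up| + 1). -/
import Mathlib


/-- Syntactic annotation values (qualifiers abstracted away). -/
inductive UVal where
  | Y | N | Q | Nh | Qh
deriving DecidableEq

/-- Inductive syntax of XPath-like predicates: truth constants, element-type
tests (`ε::A`), embedded qualifiers (bounded size), the `↑*::*[q₁][1][q₂]`
construct, ancestor tests `↑+::A[q]`, and Boolean connectives. -/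
inductive UPred (σ : Type) where
  | tt : UPred σ
  | ff : UPred σ
  | test : σ → UPred σ
  | qual : UPred σ
  | ancStarFirst : UPred σ → UPred σ → UPred σ
  | ancPlus : σ → UPred σ → UPred σ
  | and : UPred σ → UPred σ → UPred σ
  | or : UPred σ → UPred σ → UPred σ
  | not : UPred σ → UPred σ

/-- Size of a predicate: number of constructors. -/
def UPred.size {σ : Type} : UPred σ → ℕ
  | .tt => 1
  | .ff => 1
  | .test _ => 1
  | .qual => 1
  | .ancStarFirst p q => 1 + p.size + q.size
  | .ancPlus _ q => 1 + q.size
  | .and p q => 1 + p.size + q.size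
  | .or p q => 1 + p.size + q.size
  | .not p => 1 + p.size

/-- `U_ut^1 = ↑*::*[⋁ ε::A][1][⋁ valid part]`, built from the list `S` of
annotations of type `ut` (element type together with its value). -/
def buildU1 {σ : Type} (S : List (σ × UVal)) : UPred σ :=
  UPred.ancStarFirst
    (S.foldr (fun a acc => UPred.or (UPred.test a.1) acc) UPred.ff)
    (S.foldr (fun a acc =>
      match a.2 with
      | UVal.Y => UPred.or (UPred.test a.1) acc
      | UVal.Q => UPred.or (UPred.and (UPred.test a.1) UPred.qual) acc
      | UVal.Qh => UPred.or (UPred.and (UPred.test a.1) UPred.qual) acc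
      | _ => acc) UPred.ff)

/-- `U_ut^2 = ⋀_{N_h} not(↑+::A) ∧ ⋀_{[Q]_h} not(↑+::A[not Q])`. -/
def buildU2 {σ : Type} (S : List (σ × UVal)) : UPred σ :=
  S.foldr (fun a acc =>
    match a.2 with
    | UVal.Nh => UPred.and (UPred.not (UPred.ancPlus a.1 UPred.tt)) acc
    | UVal.Qh =>
        UPred.and (UPred.not (UPred.ancPlus a.1 (UPred.not UPred.qual))) acc
    | _ => acc) UPred.tt

/-- `U_ut = U_ut^1 ∧ U_ut^2`. -/
def buildU {σ : Type} (S : List (σ × UVal)) : UPred σ :=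
  UPred.and (buildU1 S) (buildU2 S)


lemma fold1_size {σ : Type} (S : List (σ × UVal)) :
    (S.foldr (fun a acc => UPred.or (UPred.test a.1) acc) UPred.ff).size
      ≤ 1 + 2 * S.length := by
  induction S with
  | nil => simp [UPred.size]
  | cons a t ih => simp only [List.foldr, UPred.size, List.length_cons]; omega

lemma fold2_size {σ : Type} (S : List (σ × UVal)) :
    (S.foldr (fun a acc =>
      match a.2 with
      | UVal.Y => UPred.or (UPred.test a.1) acc
      | UVal.Q => UPred.or (UPred.and (UPred.test a.1) UPred.qual) acc
      | UVal.Qh => UPred.or (UPred.and (UPred.test a.1) UPred.qual) acc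
      | _ => acc) UPred.ff).size ≤ 1 + 4 * S.length := by
  induction S with
  | nil => simp [UPred.size]
  | cons a t ih =>
    rcases a with ⟨x, v⟩
    cases v <;> simp only [List.foldr, UPred.size, List.length_cons] <;> omega

lemma fold3_size {σ : Type} (S : List (σ × UVal)) :
    (buildU2 S).size ≤ 1 + 5 * S.length := by
  induction S with
  | nil => simp [buildU2, UPred.size]
  | cons a t ih =>
    rcases a with ⟨x, v⟩
    cases v <;> simp only [buildU2, List.foldr, UPred.size, List.length_cons] at * <;> omega

lemma buildU_size {σ : Type} (S : List (σ × UVal)) :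
    (buildU S).size ≤ 11 * (S.length + 1) := by
  have h1 := fold1_size S
  have h2 := fold2_size S
  have h3 := fold3_size S
  simp only [buildU, buildU1, UPred.size]
  omega

/-- size bound for the updatability predicate: there is a constant
`c` such that for every update specification and update type, with `S_ut` the list
of annotations of type `ut` (a sublist of the full annotation list `annup`), the
size of `U_ut` is at most `c · (|S_ut| + 1)`, hence at most `c · (|annup| + 1)`. -/
theorem stmt13 :
    ∃ c : ℕ,
      (∀ (σ : Type) (S : List (σ × UVal)),
        (buildU S).size ≤ c * (S.length + 1)) ∧
      (∀ (σ : Type) (S annup : List (σ × UVal)), S.Sublist annup →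
        (buildU S).size ≤ c * (annup.length + 1)) := by
  refine ⟨11, fun σ S => buildU_size S, fun σ S annup h => ?_⟩
  calc (buildU S).size ≤ 11 * (S.length + 1) := buildU_size S
    _ ≤ 11 * (annup.length + 1) := by
        have := h.length_le; omega
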